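/- Suppose 𝒮 is component maximal in 𝒳 with 𝒮-maximal subsets {𝒟_X}, and X, Y ∈ 𝒳 are such that for every S ∈ 𝒮 \ {𝒩}, the components of S are contained in the components of X if and only if they are contained in the components of Y. Then 𝒟_X = 𝒟_Y. -/

import Mathlib

open Classical

universe u

/-- A (finite) hypergraph over a vertex universe `V`: a finite vertex set together with a
finite set of nonempty hyperedges, each a subset of the vertex set. -/
structure Hypergraph' (V : Type u) where
  verts : Set V
  edges : Set (Set V)
  verts_finite : verts.Finite
  edges_finite : edges.Finite
  edge_sub : ∀ e ∈ edges, e ⊆ verts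
  edge_nonempty : ∀ e ∈ edges, e.Nonempty

namespace Hypergraph'

variable {V : Type u}

/-- The null hypergraph `𝒩`. -/
def Null : Hypergraph' V :=
  ⟨∅, ∅, Set.finite_empty, Set.finite_empty, by simp, by simp⟩

/-- Direct sum (hypergraph union) of two hypergraphs. -/
def dSum (X Y : Hypergraph' V) : Hypergraph' V where
  verts := X.verts ∪ Y.verts
  edges := X.edges ∪ Y.edges
  verts_finite := X.verts_finite.union Y.verts_finite
  edges_finite := X.edges_finite.union Y.edges_finite
  edge_sub := by
    rintro e (he | he)
    · exact (X.edge_sub e he).trans Set.subset_union_left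
    · exact (Y.edge_sub e he).trans Set.subset_union_right
  edge_nonempty := by
    rintro e (he | he)
    · exact X.edge_nonempty e he
    · exact Y.edge_nonempty e he

/-- Direct sum of a set of (pairwise disjoint) hypergraphs; the null hypergraph when the
unions fail to be finite.  The direct sum of the empty set is the null hypergraph. -/
noncomputable def bigSum (A : Set (Hypergraph' V)) : Hypergraph' V :=
  if h : (⋃ X ∈ A, X.verts).Finite ∧ (⋃ X ∈ A, X.edges).Finite then
    { verts := ⋃ X ∈ A, X.verts
      edges := ⋃ X ∈ A, X.edges
      verts_finite := h.1
      edges_finite := h.2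
      edge_sub := by
        intro e he
        simp only [Set.mem_iUnion] at he
        obtain ⟨X, hX, heX⟩ := he
        intro v hv
        simp only [Set.mem_iUnion]
        exact ⟨X, hX, X.edge_sub e heX hv⟩
      edge_nonempty := by
        intro e he
        simp only [Set.mem_iUnion] at he
        obtain ⟨X, hX, heX⟩ := he
        exact X.edge_nonempty e heX }
  else Null

/-- The direct difference `X ⊖ Z`: the unique hypergraph `W` vertex disjoint from `Z`
with `X = W ⊕ Z`, when it exists. -/
noncomputable def dDiff (X Z : Hypergraph' V) : Hypergraph' V :=
  if h : ∃ W : Hypergraph' V, Disjoint W.verts Z.verts ∧ X = dSum W Z then h.choose else X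

/-- Two vertices are connected in `X` if there is a walk between them. -/
def Connected (X : Hypergraph' V) (a b : V) : Prop :=
  a ∈ X.verts ∧ Relation.ReflTransGen (fun u w => ∃ e ∈ X.edges, u ∈ e ∧ w ∈ e) a b

/-- `C` is a connected component of `X`: its vertex set is a connectivity class of `X`
and its edges are the edges of `X` lying inside it. -/
def IsComponent (X C : Hypergraph' V) : Prop :=
  (∃ v ∈ X.verts, C.verts = {w | Connected X v w}) ∧
  C.edges = {e ∈ X.edges | e ⊆ C.verts}

/-- The set `𝒞(X)` of connected components of `X`. -/
def comps (X : Hypergraph' V) : Set (Hypergraph' V) := {C | IsComponent X C}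

/-- Component disjointness: `𝒞(X) ∩ 𝒞(Y) = ∅`. -/
def CompDisjoint (X Y : Hypergraph' V) : Prop := comps X ∩ comps Y = ∅

/-- `X ∧ H`: the union (direct sum) of the components of `X` meeting some hyperedge in `H`. -/
noncomputable def wedge (X : Hypergraph' V) (H : Set (Set V)) : Hypergraph' V :=
  bigSum {C ∈ comps X | ∃ f ∈ H, (f ∩ C.verts).Nonempty}

/-- `𝒮` is component maximal in `𝒳` with `𝒮`-maximal subsets given by `D`. -/
def IsMaximalSubsets (dom S : Set (Hypergraph' V))
    (D : Hypergraph' V → Set (Hypergraph' V)) : Prop :=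
  ∀ X ∈ dom,
    D X ⊆ S ∧
    (D X).Pairwise CompDisjoint ∧
    (Null ∈ S → Null ∈ D X) ∧
    (∀ T ∈ D X, comps T ⊆ comps X) ∧
    (∀ s ∈ S, comps s ⊆ comps X → ∃ T ∈ D X, comps s ⊆ comps T)

/-- `𝒮_X := { S ∈ 𝒟_X | V(π(S)) ∩ V(X ⊖ S) = ∅ }`. -/
noncomputable def SXof (π : Hypergraph' V → Hypergraph' V)
    (D : Hypergraph' V → Set (Hypergraph' V)) (X : Hypergraph' V) : Set (Hypergraph' V) :=
  {s ∈ D X | Disjoint (π s).verts (dDiff X s).verts}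

/-- `(𝒳, π, 𝒮)` (with `𝒮`-maximal subsets `D`) is a hypergraph transformation:
nonredundancy, component maximality, and preservation of the direct sum decomposition. -/
def IsHGT (dom : Set (Hypergraph' V)) (π : Hypergraph' V → Hypergraph' V)
    (S : Set (Hypergraph' V)) (D : Hypergraph' V → Set (Hypergraph' V)) : Prop :=
  (∀ s ∈ S, comps s ∩ comps (π s) = ∅) ∧
  (Null ∈ S → π Null ≠ Null) ∧
  IsMaximalSubsets dom S D ∧
  ∀ X ∈ dom,
    (π '' SXof π D X).Pairwise (fun A B => Disjoint A.verts B.verts) ∧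
    Set.InjOn π (SXof π D X) ∧
    π X = dSum (dDiff X (bigSum (SXof π D X))) (bigSum (π '' SXof π D X))

/-- `𝒮'` is upward closed with respect to `𝒮`. -/
def UpwardClosed (S' S : Set (Hypergraph' V)) : Prop :=
  ∀ s ∈ S', ∀ t ∈ S, comps s ⊆ comps t → t ∈ S'

end Hypergraph'

open Hypergraph'

namespace Hypergraph'

variable {V : Type u}

lemma hg_ext {X Y : Hypergraph' V} (hv : X.verts = Y.verts) (he : X.edges = Y.edges) :
    X = Y := by
  cases X; cases Y; simp_all

lemma connected_mem_right {X : Hypergraph' V} {a b : V} (h : Connected X a b) :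
    b ∈ X.verts := by
  obtain ⟨ha, hr⟩ := h
  induction hr with
  | refl => exact ha
  | tail _ hstep _ => obtain ⟨e, he, _, hbe⟩ := hstep; exact X.edge_sub e he hbe

/-- The connected component of a vertex. -/
noncomputable def compOf (X : Hypergraph' V) (v : V) : Hypergraph' V where
  verts := {w | Connected X v w}
  edges := {e | e ∈ X.edges ∧ e ⊆ {w | Connected X v w}}
  verts_finite := X.verts_finite.subset fun _ hw => connected_mem_right hw
  edges_finite := X.edges_finite.subset fun _ he => he.1
  edge_sub := fun _ he => he.2
  edge_nonempty := fun e he => X.edge_nonempty e he.1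

lemma compOf_isComponent {X : Hypergraph' V} {v : V} (hv : v ∈ X.verts) :
    IsComponent X (compOf X v) := ⟨⟨v, hv, rfl⟩, rfl⟩

lemma verts_eq_iUnion (X : Hypergraph' V) : X.verts = ⋃ C ∈ comps X, C.verts := by
  apply Set.Subset.antisymm
  · intro v hv
    exact Set.mem_biUnion (compOf_isComponent hv) ⟨hv, Relation.ReflTransGen.refl⟩
  · intro w hw
    simp only [Set.mem_iUnion] at hw
    obtain ⟨C, hC, hwC⟩ := hw
    obtain ⟨⟨v, hv, hverts⟩, _⟩ := hC
    rw [hverts] at hwC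
    exact connected_mem_right hwC

lemma edges_eq_iUnion (X : Hypergraph' V) : X.edges = ⋃ C ∈ comps X, C.edges := by
  apply Set.Subset.antisymm
  · intro e he
    obtain ⟨v, hve⟩ := X.edge_nonempty e he
    have hv : v ∈ X.verts := X.edge_sub e he hve
    refine Set.mem_biUnion (compOf_isComponent hv) ⟨he, fun w hw => ?_⟩
    exact ⟨hv, Relation.ReflTransGen.single ⟨e, he, hve, hw⟩⟩
  · intro e he
    simp only [Set.mem_iUnion] at he
    obtain ⟨C, hC, heC⟩ := he
    rw [hC.2] at heC
    exact heC.1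

lemma eq_of_comps_eq {X Y : Hypergraph' V} (h : comps X = comps Y) : X = Y := by
  apply hg_ext
  · rw [verts_eq_iUnion, verts_eq_iUnion, h]
  · rw [edges_eq_iUnion, edges_eq_iUnion, h]

lemma comps_null : comps (Null : Hypergraph' V) = ∅ := by
  ext C
  simp only [comps, IsComponent, Set.mem_setOf_eq, Set.mem_empty_iff_false, iff_false]
  rintro ⟨⟨v, hv, -⟩, -⟩
  exact hv

lemma comps_nonempty {X : Hypergraph' V} (h : X ≠ Null) : (comps X).Nonempty := by
  rcases Set.eq_empty_or_nonempty X.verts with hv | ⟨v, hv⟩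
  · exfalso
    apply h
    apply hg_ext hv
    ext e
    simp only [Null, Set.mem_empty_iff_false, iff_false]
    intro he
    obtain ⟨w, hw⟩ := X.edge_nonempty e he
    have := X.edge_sub e he hw
    rw [hv] at this
    exact this
  · exact ⟨_, compOf_isComponent hv⟩

lemma ne_null_of_comps_nonempty {X : Hypergraph' V} (h : (comps X).Nonempty) :
    X ≠ Null := by
  rintro rfl
  rw [comps_null] at h
  exact h.ne_empty rfl

end Hypergraph'

lemma stmt6_aux {V : Type u} (𝒳 S : Set (Hypergraph' V))
    (D : Hypergraph' V → Set (Hypergraph' V)) (hD : IsMaximalSubsets 𝒳 S D)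
    (X Y : Hypergraph' V) (hX : X ∈ 𝒳) (hY : Y ∈ 𝒳)
    (h : ∀ s ∈ S, s ≠ Null → (comps s ⊆ comps X ↔ comps s ⊆ comps Y)) :
    D X ⊆ D Y := by
  obtain ⟨hDXS, hPW, hNull, hsub, hmax⟩ := hD X hX
  obtain ⟨hDYS, _, hNullY, hsubY, hmaxY⟩ := hD Y hY
  intro T hT
  by_cases hTn : T = Null
  · subst hTn
    exact hNullY (hDXS hT)
  · have hTS : T ∈ S := hDXS hT
    have hTX : comps T ⊆ comps X := hsub T hT
    have hTY : comps T ⊆ comps Y := (h T hTS hTn).mp hTX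
    obtain ⟨T', hT', hTT'⟩ := hmaxY T hTS hTY
    have hTne : (comps T).Nonempty := comps_nonempty hTn
    have hT'ne : T' ≠ Null := ne_null_of_comps_nonempty (hTne.mono hTT')
    have hT'S : T' ∈ S := hDYS hT'
    have hT'X : comps T' ⊆ comps X := (h T' hT'S hT'ne).mpr (hsubY T' hT')
    obtain ⟨T'', hT'', hT'T''⟩ := hmax T' hT'S hT'X
    have hTeq : T = T'' := by
      by_contra hne
      have := hPW hT hT'' hne
      obtain ⟨c, hc⟩ := hTne
      have : c ∈ comps T ∩ comps T'' := ⟨hc, hT'T'' (hTT' hc)⟩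
      rw [hPW hT hT'' hne] at this
      exact this
    subst hTeq
    have : T = T' := eq_of_comps_eq (Set.Subset.antisymm hTT' hT'T'')
    rw [this]
    exact hT'

theorem stmt6 {V : Type u} (𝒳 S : Set (Hypergraph' V)) (hS : S ⊆ 𝒳)
    (D : Hypergraph' V → Set (Hypergraph' V)) (hD : IsMaximalSubsets 𝒳 S D)
    (X Y : Hypergraph' V) (hX : X ∈ 𝒳) (hY : Y ∈ 𝒳)
    (h : ∀ s ∈ S, s ≠ Null → (comps s ⊆ comps X ↔ comps s ⊆ comps Y)) :
    D X = D Y := by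
  apply Set.Subset.antisymm
  · exact stmt6_aux 𝒳 S D hD X Y hX hY h
  · exact stmt6_aux 𝒳 S D hD Y X hY hX (fun s hs hn => (h s hs hn).symm)
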